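/- arXiv:2008.04725 — 2 statements merged into one kernel-verified Lean document; each statement's English description precedes it below -/
import Mathlib

section
/- Let u : ℝ³ → ℝ³ be a vector field each of whose components is a Schwartz function, and suppose that for some r > 0 one has Δu(x) = 0 (componentwise) whenever ‖x‖ ≥ r. Then for every R > r, ∫_{{x : ‖x‖ ≥ R}} ‖∇u(x)‖² dx ≤ (1/(R−r)) · (∫_{ℝ³} ‖∇u‖² dx)^{1/2} · (∫_{ℝ³} ‖u‖² dx)^{1/2}, where ‖∇u‖² := Σ_{j,k=1}^{3} (∂_j u_k)². -/
open MeasureTheory Real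

noncomputable section

/-- The `j`-th partial derivative of a scalar function on ℝ³. -/
def pd (j : Fin 3) (f : EuclideanSpace ℝ (Fin 3) → ℝ) (x : EuclideanSpace ℝ (Fin 3)) : ℝ :=
  fderiv ℝ f x (EuclideanSpace.single j 1)

abbrev E3 := EuclideanSpace ℝ (Fin 3)
abbrev ee (j : Fin 3) : E3 := EuclideanSpace.single j 1


lemma exists_cutoff (r R c : ℝ) (hr : 0 < r) (hR : r < R) (hc : (R - r)⁻¹ < c) :
    ∃ ψ : E3 → ℝ, Differentiable ℝ ψ ∧ (∀ x : E3, ‖x‖ ≤ r → ψ x = 0) ∧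
      (∀ x : E3, R ≤ ‖x‖ → ψ x = 1) ∧ (∀ x : E3, 0 ≤ ψ x ∧ ψ x ≤ 1) ∧
      (∀ x : E3, ‖fderiv ℝ ψ x‖ ≤ c) := by
  have hRr : 0 < R - r := by linarith
  have hc0 : 0 < c := lt_trans (by positivity) hc
  set ρ : ℝ := (R - r) / 2 with hρ
  have hρ0 : 0 < ρ := by positivity
  have hrIn0 : 0 < (2 * c)⁻¹ := by positivity
  have hrInρ : (2 * c)⁻¹ < ρ := by
    rw [hρ, inv_lt_iff_one_lt_mul₀ (by positivity)]
    have : 1 < (R - r) * c := by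
      rw [← inv_lt_iff_one_lt_mul₀' hRr]; exact hc
    nlinarith
  set b : ContDiffBump ((r + R) / 2) := ⟨(2 * c)⁻¹, ρ, hrIn0, hrInρ⟩ with hb
  have hsupp : ∀ s : ℝ, s ∉ Set.Ioo r R → b s = 0 := by
    intro s hs
    have : Function.support b = Set.Ioo r R := by
      rw [b.support_eq, Real.ball_eq_Ioo]
      congr 1 <;> ring
    exact Function.notMem_support.mp (this ▸ hs)
  have hbint : Integrable b := b.integrable
  set I : ℝ := ∫ s, b s with hI
  have hI2 : 2 * (2 * c)⁻¹ ≤ I := by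
    have := b.measure_closedBall_le_integral (μ := volume)
    rwa [Real.volume_real_closedBall (by positivity)] at this
  have hI0 : 0 < I := lt_of_lt_of_le (by positivity) hI2
  set χ : ℝ → ℝ := fun t => (∫ s in r..t, b s) / I with hχ
  -- χ derivative
  have hχderiv : ∀ t, HasDerivAt χ (b t / I) t := by
    intro t
    exact (intervalIntegral.integral_hasDerivAt_right hbint.intervalIntegrable
      hbint.aestronglyMeasurable.stronglyMeasurableAtFilter b.continuous.continuousAt).div_const I
  have hχd : Differentiable ℝ χ := fun t => (hχderiv t).differentiableAt
  have hderiv_bound : ∀ t, ‖deriv χ t‖ ≤ c := by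
    intro t
    rw [(hχderiv t).deriv]
    rw [Real.norm_eq_abs, abs_div, abs_of_nonneg b.nonneg, abs_of_pos hI0, div_le_iff₀ hI0]
    have h1 : c * (2 * (2*c)⁻¹) = 1 := by field_simp
    nlinarith [b.le_one (x := t)]
  -- χ vanishing for t ≤ r
  have hχ0 : ∀ t ≤ r, χ t = 0 := by
    intro t ht
    have : (∫ s in r..t, b s) = 0 := by
      rw [intervalIntegral.integral_symm]
      have : ∀ s ∈ Set.uIcc t r, b s = 0 := by
        intro s hs
        rw [Set.uIcc_of_le ht] at hs
        exact hsupp s (fun h => absurd h.1 (not_lt.mpr hs.2))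
      rw [intervalIntegral.integral_congr this, intervalIntegral.integral_zero, neg_zero]
    simp [hχ, this]
  have hint_eq_I : ∀ t, R ≤ t → (∫ s in r..t, b s) = I := by
    intro t ht
    have h1 : (∫ s in r..t, b s) = ∫ s in Set.Ioc r t, b s :=
      intervalIntegral.integral_of_le (le_trans hR.le ht)
    rw [h1, hI]
    exact setIntegral_eq_integral_of_forall_compl_eq_zero
      (fun s hs => hsupp s (fun h => hs ⟨h.1, le_trans h.2.le ht⟩))
  have hχ1 : ∀ t, R ≤ t → χ t = 1 := by
    intro t ht
    simp [hχ, hint_eq_I t ht, div_self hI0.ne']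
  have hχmem : ∀ t, 0 ≤ χ t ∧ χ t ≤ 1 := by
    intro t
    rcases le_or_gt t r with ht | ht
    · simp [hχ0 t ht]
    constructor
    · apply div_nonneg _ hI0.le
      exact intervalIntegral.integral_nonneg ht.le (fun s _ => b.nonneg)
    · rw [div_le_one hI0]
      rw [intervalIntegral.integral_of_le ht.le, hI]
      rw [← integral_indicator measurableSet_Ioc]
      apply integral_mono (hbint.indicator measurableSet_Ioc) hbint
      intro s
      by_cases hs : s ∈ Set.Ioc r t <;> simp [Set.indicator_of_mem, Set.indicator_of_notMem, hs, b.nonneg]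
  -- now ψ
  set ψ : E3 → ℝ := fun x => χ ‖x‖ with hψ
  have hC : LipschitzWith (⟨c, hc0.le⟩ : NNReal) χ := by
    apply lipschitzWith_of_nnnorm_deriv_le hχd
    intro t
    exact_mod_cast hderiv_bound t
  have hψlip : LipschitzWith (⟨c, hc0.le⟩ : NNReal) ψ := by
    have := hC.comp (lipschitzWith_one_norm (E := E3))
    exact this.weaken (le_of_eq (mul_one _))
  refine ⟨ψ, ?_, fun x hx => hχ0 _ hx, fun x hx => hχ1 _ hx, fun x => hχmem _, ?_⟩
  · intro x
    rcases lt_or_ge ‖x‖ r with hx | hx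
    · have hev : ψ =ᶠ[nhds x] (fun _ => 0) := by
        have hmem : Metric.ball (0 : E3) r ∈ nhds x := by
          apply Metric.isOpen_ball.mem_nhds
          simpa [Metric.mem_ball, dist_zero_right] using hx
        filter_upwards [hmem] with y hy
        rw [mem_ball_zero_iff] at hy
        exact hχ0 _ hy.le
      exact hev.differentiableAt_iff.mpr (differentiableAt_const 0)
    · have hx0 : x ≠ 0 := by intro h; rw [h] at hx; simp at hx; linarith
      exact (hχd _).comp x ((differentiableAt_id.norm ℝ) hx0)
  · intro x
    exact norm_fderiv_le_of_lipschitz ℝ hψlip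


lemma holder_sqrt (G U : E3 → ℝ) (hG : Integrable G) (hU : Integrable U)
    (hGc : Continuous G) (hUc : Continuous U)
    (hG0 : ∀ x, 0 ≤ G x) (hU0 : ∀ x, 0 ≤ U x) :
    ∫ x, Real.sqrt (G x) * Real.sqrt (U x)
      ≤ (∫ x, G x) ^ ((1:ℝ)/2) * (∫ x, U x) ^ ((1:ℝ)/2) := by
  have hpq : Real.HolderConjugate 2 2 := Real.HolderConjugate.two_two
  have hmG : MemLp (fun x => Real.sqrt (G x)) (ENNReal.ofReal 2) volume := by
    rw [show ENNReal.ofReal 2 = 2 by norm_num]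
    rw [memLp_two_iff_integrable_sq (hGc.sqrt.aestronglyMeasurable)]
    apply hG.congr
    filter_upwards with x
    rw [Real.sq_sqrt (hG0 x)]
  have hmU : MemLp (fun x => Real.sqrt (U x)) (ENNReal.ofReal 2) volume := by
    rw [show ENNReal.ofReal 2 = 2 by norm_num]
    rw [memLp_two_iff_integrable_sq (hUc.sqrt.aestronglyMeasurable)]
    apply hU.congr
    filter_upwards with x
    rw [Real.sq_sqrt (hU0 x)]
  have := integral_mul_le_Lp_mul_Lq_of_nonneg hpq
    (Filter.Eventually.of_forall fun x => Real.sqrt_nonneg (G x))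
    (Filter.Eventually.of_forall fun x => Real.sqrt_nonneg (U x)) hmG hmU
  calc ∫ x, Real.sqrt (G x) * Real.sqrt (U x) ≤
      (∫ x, Real.sqrt (G x) ^ (2:ℝ)) ^ ((1:ℝ)/2) * (∫ x, Real.sqrt (U x) ^ (2:ℝ)) ^ ((1:ℝ)/2) :=
        this
    _ = (∫ x, G x) ^ ((1:ℝ)/2) * (∫ x, U x) ^ ((1:ℝ)/2) := by
        congr 1
        · congr 1
          apply integral_congr_ae; filter_upwards with x
          rw [show (2:ℝ) = ((2:ℕ):ℝ) by norm_num, Real.rpow_natCast, Real.sq_sqrt (hG0 x)]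
        · congr 1
          apply integral_congr_ae; filter_upwards with x
          rw [show (2:ℝ) = ((2:ℕ):ℝ) by norm_num, Real.rpow_natCast, Real.sq_sqrt (hU0 x)]


lemma schwartz_mul_int (f g : SchwartzMap E3 ℝ) : Integrable (fun x => f x * g x) volume :=
  g.integrable.bdd_mul f.continuous.aestronglyMeasurable (Filter.Eventually.of_forall fun x => f.norm_le_seminorm ℝ x)

lemma bdd_mul_int (φ : E3 → ℝ) (hm : AEStronglyMeasurable φ volume) (C : ℝ)
    (hφ : ∀ x, ‖φ x‖ ≤ C) (f g : SchwartzMap E3 ℝ) :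
    Integrable (fun x => φ x * (f x * g x)) volume :=
  (schwartz_mul_int f g).bdd_mul hm (Filter.Eventually.of_forall hφ)

lemma ibp_eq (ψ : E3 → ℝ) (hψd : Differentiable ℝ ψ) (hψb : ∀ x, ‖ψ x‖ ≤ 1)
    (c : ℝ) (hgrad : ∀ x, ‖fderiv ℝ ψ x‖ ≤ c) (f : SchwartzMap E3 ℝ) (j : Fin 3) :
    ∫ x, ψ x * (LineDeriv.lineDerivOp (ee j) f x)^2
      = -(∫ x, fderiv ℝ ψ x (ee j) * (f x * LineDeriv.lineDerivOp (ee j) f x))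
        - ∫ x, ψ x * (f x * LineDeriv.lineDerivOp (ee j) (LineDeriv.lineDerivOp (ee j) f) x) := by
  set g : SchwartzMap E3 ℝ := LineDeriv.lineDerivOp (ee j) f with hg
  set gg : SchwartzMap E3 ℝ := LineDeriv.lineDerivOp (ee j) g with hgg
  have hψm : AEStronglyMeasurable ψ volume := hψd.continuous.aestronglyMeasurable
  have hdψm : AEStronglyMeasurable (fun x => fderiv ℝ ψ x (ee j)) volume :=
    (measurable_fderiv_apply_const ℝ ψ (ee j)).aestronglyMeasurable
  have hdψb : ∀ x, ‖fderiv ℝ ψ x (ee j)‖ ≤ c := by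
    intro x
    calc ‖fderiv ℝ ψ x (ee j)‖ ≤ ‖fderiv ℝ ψ x‖ * ‖ee j‖ := (fderiv ℝ ψ x).le_opNorm _
    _ = ‖fderiv ℝ ψ x‖ := by rw [EuclideanSpace.norm_single, norm_one, mul_one]
    _ ≤ c := hgrad x
  have h2' : ∀ x, fderiv ℝ (⇑g) x (ee j) = gg x := fun x => rfl
  have hfd : ∀ x, fderiv ℝ (fun y => ψ y * f y) x (ee j)
      = ψ x * g x + f x * fderiv ℝ ψ x (ee j) := by
    intro x
    rw [fderiv_fun_mul (hψd x) (f.differentiable x)]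
    simp only [ContinuousLinearMap.add_apply, ContinuousLinearMap.smul_apply, smul_eq_mul]
    rfl
  have int1 : Integrable (fun x => ψ x * (g x)^2) volume := by
    apply (bdd_mul_int ψ hψm 1 hψb g g).congr
    filter_upwards with x; ring
  have int2 : Integrable (fun x => fderiv ℝ ψ x (ee j) * (f x * g x)) volume :=
    bdd_mul_int _ hdψm c hdψb f g
  have ibp := integral_mul_fderiv_eq_neg_fderiv_mul_of_integrable
    (μ := volume) (f := fun x => ψ x * f x) (g := ⇑g) (v := ee j)
    ?_ ?_ ?_ (fun x _ => (hψd.mul f.differentiable) x) (fun x _ => g.differentiable x)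
  · have key : ∫ x, ψ x * (f x * gg x)
        = -((∫ x, ψ x * (g x)^2) + (∫ x, fderiv ℝ ψ x (ee j) * (f x * g x))) := by
      calc ∫ x, ψ x * (f x * gg x) = ∫ x, (ψ x * f x) * fderiv ℝ (⇑g) x (ee j) := by
            apply integral_congr_ae; filter_upwards with x; rw [h2' x]; ring
        _ = -∫ x, fderiv ℝ (fun y => ψ y * f y) x (ee j) * g x := ibp
        _ = -∫ x, (ψ x * (g x)^2 + fderiv ℝ ψ x (ee j) * (f x * g x)) := by
            congr 1
            apply integral_congr_ae; filter_upwards with x; rw [hfd x]; ring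
        _ = -((∫ x, ψ x * (g x)^2) + (∫ x, fderiv ℝ ψ x (ee j) * (f x * g x))) := by
            rw [integral_add int1 int2]
    linarith [key]
  · apply ((int1).add int2).congr
    filter_upwards with x
    simp only [Pi.add_apply]
    rw [hfd x]; ring
  · apply (bdd_mul_int ψ hψm 1 hψb f gg).congr
    filter_upwards with x
    rw [show fderiv ℝ (⇑g) x (ee j) = gg x from rfl]; ring
  · apply (bdd_mul_int ψ hψm 1 hψb f g).congr
    filter_upwards with x; ring


lemma pointwise_cs (ψ : E3 → ℝ) (c : ℝ) (hc : 0 ≤ c) (hgrad : ∀ x, ‖fderiv ℝ ψ x‖ ≤ c)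
    (x : E3) (a : Fin 3 → ℝ) (b : Fin 3 → Fin 3 → ℝ) :
    -∑ j, ∑ k, fderiv ℝ ψ x (ee j) * (a k * b j k)
      ≤ c * (Real.sqrt (∑ j, ∑ k, (b j k)^2) * Real.sqrt (∑ k, (a k)^2)) := by
  set v : Fin 3 → ℝ := fun j => ∑ k, a k * b j k with hv
  set w : E3 := (WithLp.equiv 2 (Fin 3 → ℝ)).symm v with hwdef
  have hw : w = ∑ j, v j • ee j := by
    ext i
    rw [WithLp.ofLp_sum, Finset.sum_apply]
    simp [hwdef, EuclideanSpace.single_apply]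
  have h1 : (∑ j, ∑ k, fderiv ℝ ψ x (ee j) * (a k * b j k)) = fderiv ℝ ψ x w := by
    rw [hw, map_sum]
    refine Finset.sum_congr rfl fun j _ => ?_
    rw [_root_.map_smul, smul_eq_mul, ← Finset.mul_sum, mul_comm]
  have hnw : ‖w‖ = Real.sqrt (∑ j, (v j)^2) := by
    rw [EuclideanSpace.norm_eq]
    congr 1
    refine Finset.sum_congr rfl fun i _ => ?_
    rw [show w i = v i from rfl, Real.norm_eq_abs, sq_abs]
  have hv2 : ∑ j, (v j)^2 ≤ (∑ k, (a k)^2) * (∑ j, ∑ k, (b j k)^2) := by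
    rw [Finset.mul_sum]
    refine Finset.sum_le_sum fun j _ => ?_
    exact Finset.sum_mul_sq_le_sq_mul_sq _ a (b j)
  have hwle : ‖w‖ ≤ Real.sqrt (∑ j, ∑ k, (b j k)^2) * Real.sqrt (∑ k, (a k)^2) := by
    rw [hnw]
    calc Real.sqrt (∑ j, (v j)^2)
        ≤ Real.sqrt ((∑ k, (a k)^2) * (∑ j, ∑ k, (b j k)^2)) := Real.sqrt_le_sqrt hv2
      _ = Real.sqrt (∑ k, (a k)^2) * Real.sqrt (∑ j, ∑ k, (b j k)^2) := by
          rw [Real.sqrt_mul (by positivity)]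
      _ = _ := mul_comm _ _
  calc -∑ j, ∑ k, fderiv ℝ ψ x (ee j) * (a k * b j k) = -(fderiv ℝ ψ x w) := by rw [h1]
    _ ≤ ‖fderiv ℝ ψ x w‖ := by rw [Real.norm_eq_abs]; exact neg_le_abs _
    _ ≤ ‖fderiv ℝ ψ x‖ * ‖w‖ := (fderiv ℝ ψ x).le_opNorm w
    _ ≤ c * (Real.sqrt (∑ j, ∑ k, (b j k)^2) * Real.sqrt (∑ k, (a k)^2)) :=
        mul_le_mul (hgrad x) hwle (norm_nonneg w) hc

theorem aux_main (u : Fin 3 → SchwartzMap E3 ℝ) (r : ℝ) (hr : 0 < r)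
    (hharm : ∀ x : E3, r ≤ ‖x‖ → ∀ k,
      ∑ j, LineDeriv.lineDerivOp (ee j) (LineDeriv.lineDerivOp (ee j) (u k)) x = 0)
    (R : ℝ) (hRR : r < R) :
    ∫ x in {x : E3 | R ≤ ‖x‖}, ∑ j, ∑ k, (LineDeriv.lineDerivOp (ee j) (u k) x)^2
      ≤ (R - r)⁻¹ * (∫ x, ∑ j, ∑ k, (LineDeriv.lineDerivOp (ee j) (u k) x)^2) ^ ((1:ℝ)/2)
        * (∫ x, ∑ k, (u k x)^2) ^ ((1:ℝ)/2) := by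
  have hRr : 0 < R - r := by linarith
  set du : Fin 3 → Fin 3 → SchwartzMap E3 ℝ :=
    fun j k => LineDeriv.lineDerivOp (ee j) (u k) with hdu
  set ddu : Fin 3 → Fin 3 → SchwartzMap E3 ℝ :=
    fun j k => LineDeriv.lineDerivOp (ee j) (du j k) with hddu
  set G : E3 → ℝ := fun x => ∑ j, ∑ k, (du j k x)^2 with hG
  set U : E3 → ℝ := fun x => ∑ k, (u k x)^2 with hU
  have hGc : Continuous G := by
    apply continuous_finset_sum _ fun j _ => continuous_finset_sum _ fun k _ => ?_
    exact (du j k).continuous.pow 2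
  have hUc : Continuous U :=
    continuous_finset_sum _ fun k _ => (u k).continuous.pow 2
  have hG0 : ∀ x, 0 ≤ G x := fun x => by positivity
  have hU0 : ∀ x, 0 ≤ U x := fun x => by positivity
  have hGint : Integrable G volume := by
    apply integrable_finset_sum _ fun j _ => integrable_finset_sum _ fun k _ => ?_
    exact (schwartz_mul_int (du j k) (du j k)).congr
      (by filter_upwards with x; rw [sq])
  have hUint : Integrable U volume := by
    apply integrable_finset_sum _ fun k _ => ?_
    exact (schwartz_mul_int (u k) (u k)).congr (by filter_upwards with x; rw [sq])
  have hSmeas : MeasurableSet {x : E3 | R ≤ ‖x‖} :=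
    measurableSet_le measurable_const (continuous_norm.measurable)
  have hIG0 : 0 ≤ ∫ x, G x := integral_nonneg hG0
  have hIU0 : 0 ≤ ∫ x, U x := integral_nonneg hU0
  set M : ℝ := (∫ x, G x) ^ ((1:ℝ)/2) * (∫ x, U x) ^ ((1:ℝ)/2) with hM
  have hM0 : 0 ≤ M := mul_nonneg (Real.rpow_nonneg hIG0 _) (Real.rpow_nonneg hIU0 _)
  -- main bound for each c
  have key : ∀ c, (R - r)⁻¹ < c → ∫ x in {x : E3 | R ≤ ‖x‖}, G x ≤ c * M := by
    intro c hc
    have hc0 : 0 < c := lt_trans (by positivity) hc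
    obtain ⟨ψ, hψd, hψzero, hψone, hψmem, hψgrad⟩ := exists_cutoff r R c hr hRR hc
    have hψm : AEStronglyMeasurable ψ volume := hψd.continuous.aestronglyMeasurable
    have hψb : ∀ x, ‖ψ x‖ ≤ 1 := fun x => by
      rw [Real.norm_eq_abs, abs_le]; exact ⟨by linarith [(hψmem x).1], (hψmem x).2⟩
    have hdψm : ∀ j : Fin 3, AEStronglyMeasurable (fun x => fderiv ℝ ψ x (ee j)) volume :=
      fun j => (measurable_fderiv_apply_const ℝ ψ (ee j)).aestronglyMeasurable
    have hdψb : ∀ (j : Fin 3) x, ‖fderiv ℝ ψ x (ee j)‖ ≤ c := by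
      intro j x
      calc ‖fderiv ℝ ψ x (ee j)‖ ≤ ‖fderiv ℝ ψ x‖ * ‖ee j‖ := (fderiv ℝ ψ x).le_opNorm _
        _ = ‖fderiv ℝ ψ x‖ := by rw [EuclideanSpace.norm_single, norm_one, mul_one]
        _ ≤ c := hψgrad x
    have Iψ : ∀ f g : SchwartzMap E3 ℝ, Integrable (fun x => ψ x * (f x * g x)) volume :=
      fun f g => bdd_mul_int ψ hψm 1 hψb f g
    have Idψ : ∀ (j : Fin 3) (f g : SchwartzMap E3 ℝ),
        Integrable (fun x => fderiv ℝ ψ x (ee j) * (f x * g x)) volume :=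
      fun j f g => bdd_mul_int _ (hdψm j) c (hdψb j) f g
    have hψGint : Integrable (fun x => ψ x * G x) volume := hGint.bdd_mul hψm (Filter.Eventually.of_forall hψb)
    -- step 1
    have step1 : ∫ x in {x : E3 | R ≤ ‖x‖}, G x ≤ ∫ x, ψ x * G x := by
      rw [← integral_indicator hSmeas]
      apply integral_mono (hGint.indicator hSmeas) hψGint
      intro x
      dsimp only
      by_cases hx : x ∈ {x : E3 | R ≤ ‖x‖}
      · rw [Set.indicator_of_mem hx, hψone x hx, one_mul]
      · rw [Set.indicator_of_notMem hx]
        exact mul_nonneg (hψmem x).1 (hG0 x)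
    -- B-terms vanish
    have hBzero : ∀ k, (∑ j, ∫ x, ψ x * (u k x * ddu j k x)) = 0 := by
      intro k
      rw [← integral_finset_sum _ (fun j _ => Iψ (u k) (ddu j k))]
      have hzz : (fun x => ∑ j, ψ x * (u k x * ddu j k x)) = (fun _ => (0:ℝ)) := by
        funext x
        rcases le_or_gt r ‖x‖ with hx | hx
        · have h0 : ∑ j, ddu j k x = 0 := hharm x hx k
          calc ∑ j, ψ x * (u k x * ddu j k x) = ψ x * u k x * ∑ j, ddu j k x := by
                rw [Finset.mul_sum]
                exact Finset.sum_congr rfl fun j _ => by ring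
            _ = 0 := by rw [h0, mul_zero]
        · simp [hψzero x hx.le]
      rw [hzz, integral_zero]
    -- step 2: ∫ ψ G = ∫ H
    have step2 : ∫ x, ψ x * G x
        = ∫ x, -∑ j, ∑ k, fderiv ℝ ψ x (ee j) * (u k x * du j k x) := by
      have e1 : ∫ x, ψ x * G x = ∑ j, ∑ k, ∫ x, ψ x * (du j k x)^2 := by
        rw [show (fun x => ψ x * G x) = fun x => ∑ j, ∑ k, ψ x * (du j k x)^2 by
          funext x; rw [hG, Finset.mul_sum]
          exact Finset.sum_congr rfl fun j _ => Finset.mul_sum _ _ _]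
        rw [integral_finset_sum _ (fun j _ => integrable_finset_sum _ fun k _ =>
          (Iψ (du j k) (du j k)).congr (by filter_upwards with x; rw [sq]))]
        exact Finset.sum_congr rfl fun j _ => integral_finset_sum _ fun k _ =>
          (Iψ (du j k) (du j k)).congr (by filter_upwards with x; rw [sq])
      have e2 : ∀ j k, ∫ x, ψ x * (du j k x)^2
          = -(∫ x, fderiv ℝ ψ x (ee j) * (u k x * du j k x))
            - ∫ x, ψ x * (u k x * ddu j k x) :=
        fun j k => ibp_eq ψ hψd hψb c hψgrad (u k) j
      have e3 : ∫ x, -∑ j, ∑ k, fderiv ℝ ψ x (ee j) * (u k x * du j k x)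
          = -∑ j, ∑ k, ∫ x, fderiv ℝ ψ x (ee j) * (u k x * du j k x) := by
        rw [integral_neg]
        congr 1
        rw [integral_finset_sum _ (fun j _ => integrable_finset_sum _ fun k _ =>
          Idψ j (u k) (du j k))]
        exact Finset.sum_congr rfl fun j _ => integral_finset_sum _ fun k _ =>
          Idψ j (u k) (du j k)
      rw [e1, e3]
      calc ∑ j, ∑ k, ∫ x, ψ x * (du j k x)^2
          = ∑ j, ∑ k, (-(∫ x, fderiv ℝ ψ x (ee j) * (u k x * du j k x))
              - ∫ x, ψ x * (u k x * ddu j k x)) :=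
            Finset.sum_congr rfl fun j _ => Finset.sum_congr rfl fun k _ => e2 j k
        _ = (∑ j, ∑ k, -(∫ x, fderiv ℝ ψ x (ee j) * (u k x * du j k x)))
              - ∑ j, ∑ k, ∫ x, ψ x * (u k x * ddu j k x) := by
            rw [← Finset.sum_sub_distrib]
            exact Finset.sum_congr rfl fun j _ => Finset.sum_sub_distrib _ _
        _ = (∑ j, ∑ k, -(∫ x, fderiv ℝ ψ x (ee j) * (u k x * du j k x))) - 0 := by
            congr 1
            rw [Finset.sum_comm]
            exact Finset.sum_eq_zero fun k _ => hBzero k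
        _ = -∑ j, ∑ k, ∫ x, fderiv ℝ ψ x (ee j) * (u k x * du j k x) := by
            rw [sub_zero, ← Finset.sum_neg_distrib]
            exact Finset.sum_congr rfl fun j _ => Finset.sum_neg_distrib _
    -- integrability of H and sqrt products
    have hHint : Integrable
        (fun x => -∑ j, ∑ k, fderiv ℝ ψ x (ee j) * (u k x * du j k x)) volume := by
      apply Integrable.neg
      exact integrable_finset_sum _ fun j _ => integrable_finset_sum _ fun k _ =>
        Idψ j (u k) (du j k)
    have hsint : Integrable (fun x => Real.sqrt (G x) * Real.sqrt (U x)) volume := by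
      apply Integrable.mono' ((hGint.add hUint).div_const 2)
        ((hGc.sqrt.mul hUc.sqrt).aestronglyMeasurable)
      filter_upwards with x
      rw [Real.norm_eq_abs, Pi.mul_apply, abs_of_nonneg (mul_nonneg (Real.sqrt_nonneg _) (Real.sqrt_nonneg _))]
      simp only [Pi.add_apply]
      nlinarith [Real.sq_sqrt (hG0 x), Real.sq_sqrt (hU0 x), Real.sqrt_nonneg (G x),
        Real.sqrt_nonneg (U x), sq_nonneg (Real.sqrt (G x) - Real.sqrt (U x))]
    -- pointwise bound and conclusion
    have step3 : ∫ x, -∑ j, ∑ k, fderiv ℝ ψ x (ee j) * (u k x * du j k x)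
        ≤ c * ∫ x, Real.sqrt (G x) * Real.sqrt (U x) := by
      rw [← integral_const_mul]
      apply integral_mono hHint (hsint.const_mul c)
      intro x
      dsimp only
      exact pointwise_cs ψ c hc0.le hψgrad x (fun k => u k x) (fun j k => du j k x)
    have step4 := holder_sqrt G U hGint hUint hGc hUc hG0 hU0
    calc ∫ x in {x : E3 | R ≤ ‖x‖}, G x ≤ ∫ x, ψ x * G x := step1
      _ = ∫ x, -∑ j, ∑ k, fderiv ℝ ψ x (ee j) * (u k x * du j k x) := step2
      _ ≤ c * ∫ x, Real.sqrt (G x) * Real.sqrt (U x) := step3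
      _ ≤ c * M := by
          rw [hM]
          exact mul_le_mul_of_nonneg_left step4 hc0.le
  -- limit c → (R-r)⁻¹
  have final : ∫ x in {x : E3 | R ≤ ‖x‖}, G x ≤ (R - r)⁻¹ * M := by
    have htend : Filter.Tendsto (fun c : ℝ => c * M)
        (nhdsWithin (R - r)⁻¹ (Set.Ioi (R - r)⁻¹)) (nhds ((R - r)⁻¹ * M)) :=
      ((continuous_id.mul continuous_const).tendsto _).mono_left nhdsWithin_le_nhds
    refine ge_of_tendsto htend ?_
    filter_upwards [self_mem_nhdsWithin] with c hc
    exact key c hc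
  calc ∫ x in {x : E3 | R ≤ ‖x‖}, G x ≤ (R - r)⁻¹ * M := final
    _ = (R - r)⁻¹ * (∫ x, G x) ^ ((1:ℝ)/2) * (∫ x, U x) ^ ((1:ℝ)/2) := by
        rw [hM, mul_assoc]

/-- Tail estimate: if the components of a Schwartz vector field u on ℝ³ are harmonic
outside the ball of radius r, then for every R > r the Dirichlet energy of u outside the
ball of radius R is at most (R−r)⁻¹ ‖∇u‖_{L²} ‖u‖_{L²}. -/
theorem tail_gradient_estimate_of_harmonic_outside_ball
    (u : Fin 3 → SchwartzMap (EuclideanSpace ℝ (Fin 3)) ℝ) (r : ℝ) (hr : 0 < r)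
    (hharm : ∀ x : EuclideanSpace ℝ (Fin 3), r ≤ ‖x‖ →
      ∀ k, ∑ j, pd j (fun y => pd j (fun z => u k z) y) x = 0) :
    ∀ R : ℝ, r < R →
      ∫ x in {x : EuclideanSpace ℝ (Fin 3) | R ≤ ‖x‖},
          ∑ j, ∑ k, (pd j (fun y => u k y) x) ^ 2
        ≤ (R - r)⁻¹ *
            (∫ x : EuclideanSpace ℝ (Fin 3), ∑ j, ∑ k, (pd j (fun y => u k y) x) ^ 2)
              ^ ((1 : ℝ) / 2) *
            (∫ x : EuclideanSpace ℝ (Fin 3), ∑ k, (u k x) ^ 2) ^ ((1 : ℝ) / 2) := by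
  intro R hRR
  exact aux_main u r hr (fun x hx k => hharm x hx k) R hRR
end
end

section
/- Let α ≥ 1 and let f : ℝ³ → ℝ be a measurable function that is 2α-periodic in each coordinate, i.e. f(x + 2αk) = f(x) for all x ∈ ℝ³ and all k ∈ ℤ³. Let g : ℝ³ → ℝ be measurable with |g(x)| ≤ |f(x)| for all x and g(x) = 0 whenever x ∉ [−(α+1), α+1]³. Then for every R with 0 < R ≤ α − 1, ∫_{{x : ‖x‖ ≥ R}} |g(x)|² dx ≤ 27 ∫_{{x ∈ (−α,α)³ : ‖x‖ ≥ R}} |f(x)|² dx. -/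
open MeasureTheory Real ENNReal

noncomputable section

/-- The translation vector `2αk` as an element of Euclidean space. -/
def cvec3 (α : ℝ) (k : Fin 3 → ℤ) : EuclideanSpace ℝ (Fin 3) :=
  show EuclideanSpace ℝ (Fin 3) from WithLp.toLp 2 (fun i => 2 * α * (k i : ℝ))

lemma abs_coord_le_norm3 (x : EuclideanSpace ℝ (Fin 3)) (i : Fin 3) : |x i| ≤ ‖x‖ := by
  rw [EuclideanSpace.norm_eq, ← Real.sqrt_sq_eq_abs]
  apply Real.sqrt_le_sqrt
  calc (x i) ^ 2 = ‖x i‖ ^ 2 := by rw [Real.norm_eq_abs, sq_abs]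
    _ ≤ _ := Finset.single_le_sum (fun j _ => sq_nonneg ‖x j‖) (Finset.mem_univ i)

lemma coord_hyperplane_null3 (i : Fin 3) (c : ℝ) :
    (volume {x : EuclideanSpace ℝ (Fin 3) | x i = c}) = 0 := by
  have hms : MeasurableSet {y : Fin 3 → ℝ | y i = c} :=
    measurableSet_eq_fun (measurable_pi_apply i) measurable_const
  have h := (EuclideanSpace.volume_preserving_symm_measurableEquiv_toLp (Fin 3)).measure_preimage
    hms.nullMeasurableSet
  have hset : (MeasurableEquiv.toLp 2 (Fin 3 → ℝ)).symm ⁻¹' {y : Fin 3 → ℝ | y i = c}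
      = {x : EuclideanSpace ℝ (Fin 3) | x i = c} := rfl
  rw [hset] at h
  rw [h]
  have : {y : Fin 3 → ℝ | y i = c}
      = Set.pi Set.univ (fun j => if j = i then {c} else Set.univ) := by
    ext y
    simp only [Set.mem_setOf_eq, Set.mem_pi, Set.mem_univ, forall_true_left]
    constructor
    · intro hy j; by_cases hj : j = i <;> simp [hj, hy]
    · intro hy; have := hy i; simpa using this
  rw [this, volume_pi_pi]
  apply Finset.prod_eq_zero (Finset.mem_univ i)
  simp

/-- Tail estimate for the cut-off extension of a periodic function: if f is 2α-periodic
(α ≥ 1), |g| ≤ |f|, and g vanishes outside [−(α+1), α+1]³, then for 0 < R ≤ α − 1 the tail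
∫_{‖x‖≥R} g² is at most 27 times the tail of f² over the periodic cell (−α,α)³. -/
theorem tail_of_cutoff_extension_le
    (α : ℝ) (hα : 1 ≤ α) (f g : EuclideanSpace ℝ (Fin 3) → ℝ)
    (hf : Measurable f) (hg : Measurable g)
    (hper : ∀ (x : EuclideanSpace ℝ (Fin 3)) (k : Fin 3 → ℤ),
      f (x + (show EuclideanSpace ℝ (Fin 3) from WithLp.toLp 2 (fun i => 2 * α * (k i : ℝ)))) = f x)
    (hdom : ∀ x, |g x| ≤ |f x|)
    (hsupp : ∀ x : EuclideanSpace ℝ (Fin 3), ¬(∀ i, |x i| ≤ α + 1) → g x = 0) :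
    ∀ R : ℝ, 0 < R → R ≤ α - 1 →
      ∫⁻ x in {x : EuclideanSpace ℝ (Fin 3) | R ≤ ‖x‖}, ENNReal.ofReal ((g x) ^ 2)
        ≤ 27 * ∫⁻ x in {x : EuclideanSpace ℝ (Fin 3) | (∀ i, |x i| < α) ∧ R ≤ ‖x‖},
            ENNReal.ofReal ((f x) ^ 2) := by
  intro R hR hRα
  classical
  set F : (EuclideanSpace ℝ (Fin 3)) → ℝ≥0∞ := fun x => ENNReal.ofReal ((f x) ^ 2) with hFdef
  set Tgt : Set (EuclideanSpace ℝ (Fin 3)) := {x : (EuclideanSpace ℝ (Fin 3)) | (∀ i, |x i| < α) ∧ R ≤ ‖x‖} with hTgtdef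
  set T : (Fin 3 → ℤ) → Set (EuclideanSpace ℝ (Fin 3)) :=
    fun k => {x : (EuclideanSpace ℝ (Fin 3)) | (∀ i, |x i - 2 * α * (k i : ℝ)| < α) ∧ R ≤ ‖x - cvec3 α k‖} with hTdef
  set S : Finset (Fin 3 → ℤ) := Fintype.piFinset (fun _ => ({-1, 0, 1} : Finset ℤ)) with hSdef
  have hcoord : ∀ i, Measurable (fun x : (EuclideanSpace ℝ (Fin 3)) => x i) :=
    fun i => (EuclideanSpace.proj i : (EuclideanSpace ℝ (Fin 3)) →L[ℝ] ℝ).continuous.measurable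
  have hFmeas : Measurable F := ENNReal.measurable_ofReal.comp (hf.pow_const 2)
  have hTmeas : ∀ k, MeasurableSet (T k) := by
    intro k
    have heq : T k = (⋂ i, {x : (EuclideanSpace ℝ (Fin 3)) | |x i - 2 * α * (k i : ℝ)| < α})
        ∩ {x : (EuclideanSpace ℝ (Fin 3)) | R ≤ ‖x - cvec3 α k‖} := by
      ext x
      simp only [hTdef, Set.mem_setOf_eq, Set.mem_inter_iff, Set.mem_iInter]
    rw [heq]
    exact (MeasurableSet.iInter fun i =>
        measurableSet_lt ((hcoord i).sub measurable_const).abs measurable_const).inter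
      (measurableSet_le measurable_const ((measurable_id.sub measurable_const).norm))
  have hTgtmeas : MeasurableSet Tgt := by
    have heq : Tgt = (⋂ i, {x : (EuclideanSpace ℝ (Fin 3)) | |x i| < α})
        ∩ {x : (EuclideanSpace ℝ (Fin 3)) | R ≤ ‖x‖} := by
      ext x
      simp only [hTgtdef, Set.mem_setOf_eq, Set.mem_inter_iff, Set.mem_iInter]
    rw [heq]
    exact (MeasurableSet.iInter fun i =>
        measurableSet_lt (hcoord i).abs measurable_const).inter
      (measurableSet_le measurable_const measurable_norm)
  have hRmeas : MeasurableSet {x : (EuclideanSpace ℝ (Fin 3)) | R ≤ ‖x‖} :=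
    measurableSet_le measurable_const measurable_norm
  -- the null set of bad boundary points
  set N : Set (EuclideanSpace ℝ (Fin 3)) := {x : (EuclideanSpace ℝ (Fin 3)) | ∃ i, x i = α ∨ x i = -α} with hNdef
  have hNnull : volume N = 0 := by
    have hsub : N ⊆ ⋃ i, ({x : (EuclideanSpace ℝ (Fin 3)) | x i = α} ∪ {x : (EuclideanSpace ℝ (Fin 3)) | x i = -α}) := by
      rintro x ⟨i, hi⟩
      exact Set.mem_iUnion.mpr ⟨i, hi⟩
    refine measure_mono_null hsub (measure_iUnion_null fun i => ?_)
    exact measure_union_null (coord_hyperplane_null3 i α) (coord_hyperplane_null3 i (-α))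
  -- pointwise bound off the null set
  have key : ∀ x ∉ N,
      Set.indicator {x : (EuclideanSpace ℝ (Fin 3)) | R ≤ ‖x‖} (fun x => ENNReal.ofReal ((g x) ^ 2)) x
        ≤ ∑ k ∈ S, Set.indicator (T k) F x := by
    intro x hxN
    by_cases hxR : x ∈ {x : (EuclideanSpace ℝ (Fin 3)) | R ≤ ‖x‖}
    · rw [Set.indicator_of_mem hxR]
      by_cases hgx : g x = 0
      · simp [hgx]
      · have hsup : ∀ i, |x i| ≤ α + 1 := by
          by_contra h; exact hgx (hsupp x h)
        have hne : ∀ i, x i ≠ α ∧ x i ≠ -α := by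
          intro i
          constructor <;> intro h <;> exact hxN ⟨i, by simp [h]⟩
        have hk : ∀ i, ∃ m : ℤ, m ∈ ({-1, 0, 1} : Finset ℤ) ∧
            |x i - 2 * α * (m : ℝ)| < α ∧ (m ≠ 0 → α - 1 ≤ |x i - 2 * α * (m : ℝ)|) := by
          intro i
          have hxi := hsup i
          obtain ⟨hne1, hne2⟩ := hne i
          by_cases h1 : |x i| < α
          · exact ⟨0, by decide, by simpa using h1, fun h => absurd rfl h⟩
          · have habs : α < |x i| := by
              rcases lt_or_eq_of_le (not_lt.mp h1) with h | h
              · exact h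
              · exfalso
                rcases abs_eq (by linarith : (0:ℝ) ≤ α) |>.mp h.symm with h' | h'
                · exact hne1 h'
                · exact hne2 h'
            rcases le_or_gt 0 (x i) with h0 | h0
            · -- x i > α
              have hgt : α < x i := by
                rcases abs_cases (x i) with ⟨he, _⟩ | ⟨he, _⟩
                · rwa [he] at habs
                · nlinarith [habs, he]
              obtain ⟨hlb, hub⟩ := abs_le.mp hxi
              refine ⟨1, by decide, ?_, fun _ => ?_⟩
              · push_cast
                rw [abs_lt]
                constructor <;> linarith
              · push_cast
                have h2 : -(x i - 2 * α * 1) ≤ |x i - 2 * α * 1| := neg_le_abs _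
                linarith
            · -- x i < -α
              have hlt : x i < -α := by
                rcases abs_cases (x i) with ⟨he, _⟩ | ⟨he, _⟩
                · nlinarith
                · nlinarith
              obtain ⟨hlb, hub⟩ := abs_le.mp hxi
              refine ⟨-1, by decide, ?_, fun _ => ?_⟩
              · push_cast
                rw [abs_lt]
                constructor <;> linarith
              · push_cast
                have h2 : (x i - 2 * α * (-1)) ≤ |x i - 2 * α * (-1)| := le_abs_self _
                linarith
        choose m hmS hmlt hmfar using hk
        have hkS : m ∈ S := Fintype.mem_piFinset.mpr hmS
        have hxT : x ∈ T m := by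
          refine ⟨hmlt, ?_⟩
          by_cases h0 : ∀ i, m i = 0
          · have hc0 : cvec3 α m = 0 := by
              ext i; simp [cvec3, h0 i]
            rw [hc0, sub_zero]
            exact hxR
          · push_neg at h0
            obtain ⟨i, hi⟩ := h0
            have h2 : α - 1 ≤ |x i - 2 * α * (m i : ℝ)| := hmfar i hi
            have h3 : |(x - cvec3 α m) i| ≤ ‖x - cvec3 α m‖ := abs_coord_le_norm3 _ i
            have h4 : (x - cvec3 α m) i = x i - 2 * α * (m i : ℝ) := by simp [cvec3]
            rw [h4] at h3
            linarith
        calc ENNReal.ofReal ((g x) ^ 2) ≤ F x := by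
              apply ENNReal.ofReal_le_ofReal
              calc (g x) ^ 2 = |g x| ^ 2 := (sq_abs _).symm
                _ ≤ |f x| ^ 2 := pow_le_pow_left₀ (abs_nonneg _) (hdom x) 2
                _ = (f x) ^ 2 := sq_abs _
          _ = Set.indicator (T m) F x := (Set.indicator_of_mem hxT F).symm
          _ ≤ ∑ k ∈ S, Set.indicator (T k) F x :=
              Finset.single_le_sum (f := fun k => Set.indicator (T k) F x)
                (fun k _ => zero_le) hkS
    · rw [Set.indicator_of_notMem hxR]
      exact zero_le
  -- translation invariance
  have htrans : ∀ k, (∫⁻ x, Set.indicator (T k) F x) = ∫⁻ x in Tgt, F x := by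
    intro k
    have h1 : ∀ x : (EuclideanSpace ℝ (Fin 3)), Set.indicator (T k) F (x + cvec3 α k) = Set.indicator Tgt F x := by
      intro x
      have hmem : (x + cvec3 α k) ∈ T k ↔ x ∈ Tgt := by
        have hco : ∀ i, (x + cvec3 α k) i - 2 * α * (k i : ℝ) = x i := by
          intro i
          simp [cvec3]
        have hnorm : x + cvec3 α k - cvec3 α k = x := add_sub_cancel_right x _
        constructor
        · rintro ⟨ha, hb⟩
          refine ⟨fun i => by rw [← hco i]; exact ha i, ?_⟩
          rwa [hnorm] at hb
        · rintro ⟨ha, hb⟩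
          refine ⟨fun i => by rw [hco i]; exact ha i, ?_⟩
          rwa [hnorm]
      have hval : F (x + cvec3 α k) = F x := by
        have hfx : f (x + cvec3 α k) = f x := hper x k
        simp only [hFdef]
        rw [hfx]
      by_cases hx : x ∈ Tgt
      · rw [Set.indicator_of_mem hx, Set.indicator_of_mem (hmem.mpr hx), hval]
      · rw [Set.indicator_of_notMem hx,
          Set.indicator_of_notMem (fun h => hx (hmem.mp h))]
    calc (∫⁻ x, Set.indicator (T k) F x)
        = ∫⁻ x, Set.indicator (T k) F (x + cvec3 α k) :=
          (lintegral_add_right_eq_self (Set.indicator (T k) F) (cvec3 α k)).symm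
      _ = ∫⁻ x, Set.indicator Tgt F x := by simp_rw [h1]
      _ = ∫⁻ x in Tgt, F x := lintegral_indicator hTgtmeas F
  have hcard : S.card = 27 := by
    rw [hSdef, Fintype.card_piFinset]
    decide
  calc ∫⁻ x in {x : (EuclideanSpace ℝ (Fin 3)) | R ≤ ‖x‖}, ENNReal.ofReal ((g x) ^ 2)
      = ∫⁻ x, Set.indicator {x : (EuclideanSpace ℝ (Fin 3)) | R ≤ ‖x‖} (fun x => ENNReal.ofReal ((g x) ^ 2)) x :=
        (lintegral_indicator hRmeas _).symm
    _ ≤ ∫⁻ x, ∑ k ∈ S, Set.indicator (T k) F x := by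
        apply lintegral_mono_ae
        filter_upwards [measure_eq_zero_iff_ae_notMem.mp hNnull] with x hx using key x hx
    _ = ∑ k ∈ S, ∫⁻ x, Set.indicator (T k) F x :=
        lintegral_finset_sum S (fun k _ => hFmeas.indicator (hTmeas k))
    _ = ∑ _k ∈ S, ∫⁻ x in Tgt, F x := Finset.sum_congr rfl (fun k _ => htrans k)
    _ = 27 * ∫⁻ x in Tgt, F x := by
        rw [Finset.sum_const, hcard, nsmul_eq_mul]
        norm_num
end
end
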